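/- Let k ≥ 2 be an integer. Every symmetric polynomial matrix τ whose entries have total degree at most k can be written as τ = sym curl v + x xᵀ q, where v = (v₁, v₂) is a polynomial vector field with components of total degree at most k+1 and q is a polynomial of total degree at most k−2; moreover the polynomial q is uniquely determined by τ. -/

import Mathlib

open MvPolynomial Matrix

/-- Real polynomials in two variables. -/
abbrev P2 := MvPolynomial (Fin 2) ℝ

/-- The matrix `curl v` of a polynomial vector field, defined row-wise:
`(curl v)_{i1} = ∂₂ vᵢ`, `(curl v)_{i2} = -∂₁ vᵢ`. -/
noncomputable def pcurl (v : Fin 2 → P2) : Matrix (Fin 2) (Fin 2) P2 :=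
  Matrix.of fun i j =>
    if j = 0 then pderiv (1 : Fin 2) (v i) else -(pderiv (0 : Fin 2) (v i))

/-- `sym curl v := (curl v + (curl v)ᵀ)/2`. -/
noncomputable def psymCurl (v : Fin 2 → P2) : Matrix (Fin 2) (Fin 2) P2 :=
  (1 / 2 : ℝ) • (pcurl v + (pcurl v)ᵀ)

/-- `div div τ := Σ_{i,j} ∂ᵢ∂ⱼ τ_{ij}`. -/
noncomputable def pdivDiv (τ : Matrix (Fin 2) (Fin 2) P2) : P2 :=
  ∑ i : Fin 2, ∑ j : Fin 2, pderiv i (pderiv j (τ i j))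

/-- The matrix `x xᵀ q` with `(i,j)`-entry `Xᵢ · Xⱼ · q`. -/
noncomputable def xxT (q : P2) : Matrix (Fin 2) (Fin 2) P2 :=
  Matrix.of fun i j => X i * X j * q

/-- The polynomial vector `x^⊥ = (X₂, -X₁)`. -/
noncomputable def xPerp : Fin 2 → P2 := ![X 1, -X 0]

/-- `rot τ`, with components `(rot τ)ᵢ = ∂₁ τ_{i2} - ∂₂ τ_{i1}`. -/
noncomputable def prot (τ : Matrix (Fin 2) (Fin 2) P2) : Fin 2 → P2 :=
  fun i => pderiv (0 : Fin 2) (τ i 1) - pderiv (1 : Fin 2) (τ i 0)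

/-- The Hessian matrix `∇²q` with entries `∂ᵢ∂ⱼ q`. -/
noncomputable def phess (q : P2) : Matrix (Fin 2) (Fin 2) P2 :=
  Matrix.of fun i j => pderiv i (pderiv j q)

/-- `sym(x^⊥ ⊗ v)`, the symmetric matrix with `(i,j)`-entry
`((x^⊥)ᵢ vⱼ + vᵢ (x^⊥)ⱼ)/2`. -/
noncomputable def symTen (v : Fin 2 → P2) : Matrix (Fin 2) (Fin 2) P2 :=
  Matrix.of fun i j => (1 / 2 : ℝ) • (xPerp i * v j + v i * xPerp j)

/-- The gradient matrix `∇v` with entries `(∇v)_{ij} = ∂ⱼ vᵢ`. -/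
noncomputable def pgrad (v : Fin 2 → P2) : Matrix (Fin 2) (Fin 2) P2 :=
  Matrix.of fun i j => pderiv j (v i)

/-- The symmetric gradient `def v := (∇v + (∇v)ᵀ)/2`. -/
noncomputable def pdef (v : Fin 2 → P2) : Matrix (Fin 2) (Fin 2) P2 :=
  (1 / 2 : ℝ) • (pgrad v + (pgrad v)ᵀ)

/-- The matrix `x^⊥ (x^⊥)ᵀ q` with `(i,j)`-entry `(x^⊥)ᵢ (x^⊥)ⱼ q`. -/
noncomputable def xPerpxPerpT (q : P2) : Matrix (Fin 2) (Fin 2) P2 :=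
  Matrix.of fun i j => xPerp i * xPerp j * q

/-- `rot rot τ := ∂₁(rot τ)₂ − ∂₂(rot τ)₁`. -/
noncomputable def protRot (τ : Matrix (Fin 2) (Fin 2) P2) : P2 :=
  pderiv (0 : Fin 2) (prot τ 1) - pderiv (1 : Fin 2) (prot τ 0)

namespace Stmt8

open Finsupp

lemma coeff_pderiv (i : Fin 2) (f : P2) (t : Fin 2 →₀ ℕ) :
    coeff t (pderiv i f) = coeff (t + Finsupp.single i 1) f * ((t i : ℝ) + 1) := by
  conv_lhs => rw [f.as_sum]
  rw [map_sum, coeff_sum]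
  rw [Finset.sum_eq_single (t + Finsupp.single i 1)]
  · rw [pderiv_monomial, add_tsub_cancel_right, coeff_monomial, if_pos rfl]
    simp [mul_comm]
  · intro s _ hne
    rw [pderiv_monomial, coeff_monomial]
    rcases Nat.eq_zero_or_pos (s i) with h | h
    · split <;> simp [h]
    · split
      · next heq =>
        exfalso; apply hne
        rw [← heq, tsub_add_cancel_of_le]
        exact Finsupp.single_le_iff.mpr h
      · rfl
  · intro h
    rw [MvPolynomial.notMem_support_iff.mp h]
    simp

/-- generic coefficient-level operator -/
noncomputable def mkOp (h : (Fin 2 →₀ ℕ) → (Fin 2 →₀ ℕ)) (g : (Fin 2 →₀ ℕ) → ℝ → ℝ)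
    (p : P2) : P2 :=
  ∑ s ∈ p.support, monomial (h s) (g s (coeff s p))

lemma coeff_mkOp {h g} (hinj : Function.Injective h) (hg0 : ∀ s, g s 0 = 0)
    (p : P2) (t : Fin 2 →₀ ℕ) : coeff (h t) (mkOp h g p) = g t (coeff t p) := by
  rw [mkOp, coeff_sum, Finset.sum_eq_single t]
  · rw [coeff_monomial, if_pos rfl]
  · intro s _ hne
    rw [coeff_monomial, if_neg (fun he => hne (hinj he))]
  · intro hni
    rw [MvPolynomial.notMem_support_iff.mp hni, hg0, coeff_monomial]
    simp

lemma coeff_mkOp_of_ne {h g} (p : P2) {t : Fin 2 →₀ ℕ} (hn : ∀ s, h s ≠ t) :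
    coeff t (mkOp h g p) = 0 := by
  rw [mkOp, coeff_sum, Finset.sum_eq_zero]
  intro s _
  rw [coeff_monomial, if_neg (fun he => hn s he)]

lemma totalDegree_le_of_coeff {f : P2} {n : ℕ}
    (h : ∀ t : Fin 2 →₀ ℕ, coeff t f ≠ 0 → (t.sum fun _ e => e) ≤ n) :
    f.totalDegree ≤ n :=
  Finset.sup_le fun s hs => h s (MvPolynomial.mem_support_iff.mp hs)

lemma coeff_ne_zero_totalDegree {f : P2} {t : Fin 2 →₀ ℕ} (h : coeff t f ≠ 0) :
    (t.sum fun _ e => e) ≤ f.totalDegree :=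
  MvPolynomial.le_totalDegree (MvPolynomial.mem_support_iff.mpr h)

lemma totalDegree_mkOp_le {h g} (p : P2) {n : ℕ}
    (hh : ∀ s, coeff s p ≠ 0 → ((h s).sum fun _ e => e) ≤ n) :
    (mkOp h g p).totalDegree ≤ n := by
  refine (totalDegree_finset_sum _ _).trans (Finset.sup_le fun s hs => ?_)
  exact (totalDegree_monomial_le _ _).trans (hh s (MvPolynomial.mem_support_iff.mp hs))

lemma sum_add_single (t : Fin 2 →₀ ℕ) (i : Fin 2) :
    ((t + Finsupp.single i 1).sum fun _ e => e) = (t.sum fun _ e => e) + 1 := by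
  rw [Finsupp.sum_add_index' (fun _ => rfl) (fun _ _ _ => rfl),
    Finsupp.sum_single_index rfl]

/-- integration in variable `i` -/
noncomputable def Iop (i : Fin 2) : P2 → P2 :=
  mkOp (· + Finsupp.single i 1) (fun s a => a / (s i + 1))

/-- inverse of `(E+2)(E+3)` -/
noncomputable def Sop : P2 → P2 :=
  mkOp id (fun s a => a / (((s.sum fun _ e => e) + 2) * ((s.sum fun _ e => e) + 3)))

/-- the part of a polynomial not involving variable `1` -/
noncomputable def Pi0 : P2 → P2 :=
  mkOp id (fun s a => if s 1 = 0 then a else 0)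

lemma coeff_Iop (i : Fin 2) (p : P2) (t : Fin 2 →₀ ℕ) :
    coeff (t + Finsupp.single i 1) (Iop i p) = coeff t p / ((t i : ℝ) + 1) := by
  have := coeff_mkOp (h := (· + Finsupp.single i 1))
    (g := fun s a => a / (s i + 1)) (fun a b hab => by simpa using hab)
    (fun s => by simp) p t
  exact this

lemma coeff_Iop_zero (i : Fin 2) (p : P2) {t : Fin 2 →₀ ℕ} (ht : t i = 0) :
    coeff t (Iop i p) = 0 := by
  refine coeff_mkOp_of_ne p fun s he => ?_
  have := congrArg (fun u : Fin 2 →₀ ℕ => u i) he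
  simp [ht, Finsupp.add_apply] at this

lemma coeff_Sop (p : P2) (t : Fin 2 →₀ ℕ) :
    coeff t (Sop p) =
      coeff t p / (((t.sum fun _ e => e) + 2) * ((t.sum fun _ e => e) + 3)) :=
  coeff_mkOp (fun _ _ h => h) (fun s => by simp) p t

lemma coeff_Pi0 (p : P2) (t : Fin 2 →₀ ℕ) :
    coeff t (Pi0 p) = if t 1 = 0 then coeff t p else 0 :=
  coeff_mkOp (fun _ _ h => h) (fun s => by simp) p t

lemma pderiv_Iop_self (i : Fin 2) (p : P2) : pderiv i (Iop i p) = p := by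
  ext t
  rw [coeff_pderiv, coeff_Iop]
  have : ((t i : ℝ) + 1) ≠ 0 := by positivity
  field_simp

lemma coeff_add_eq_zero_of_pderiv {j : Fin 2} {p : P2} (hp : pderiv j p = 0)
    (u : Fin 2 →₀ ℕ) : coeff (u + Finsupp.single j 1) p = 0 := by
  have := coeff_pderiv j p u
  rw [hp] at this
  simp only [MvPolynomial.coeff_zero] at this
  have hne : ((u j : ℝ) + 1) ≠ 0 := by positivity
  exact (mul_eq_zero.mp this.symm).resolve_right hne

lemma pderiv_Iop_of_ne {i j : Fin 2} (hij : j ≠ i) {p : P2} (hp : pderiv j p = 0) :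
    pderiv j (Iop i p) = 0 := by
  ext t
  rw [coeff_pderiv, MvPolynomial.coeff_zero]
  rcases Nat.eq_zero_or_pos (t i) with h | h
  · rw [coeff_Iop_zero i p (by simp [Finsupp.add_apply, Finsupp.single_apply, hij, h]), zero_mul]
  · have ht : t = (t - Finsupp.single i 1) + Finsupp.single i 1 :=
      (tsub_add_cancel_of_le (Finsupp.single_le_iff.mpr h)).symm
    rw [ht]
    have : t - Finsupp.single i 1 + Finsupp.single i 1 + Finsupp.single j 1
        = (t - Finsupp.single i 1 + Finsupp.single j 1) + Finsupp.single i 1 := by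
      rw [add_right_comm]
    rw [this, coeff_Iop, coeff_add_eq_zero_of_pderiv hp]
    simp

lemma totalDegree_Iop_le {i : Fin 2} {p : P2} {n : ℕ} (hp : p.totalDegree ≤ n) :
    (Iop i p).totalDegree ≤ n + 1 := by
  refine totalDegree_mkOp_le p fun s hs => ?_
  rw [sum_add_single]
  exact Nat.add_le_add_right ((coeff_ne_zero_totalDegree hs).trans hp) 1

lemma totalDegree_Sop_le {p : P2} {n : ℕ} (hp : p.totalDegree ≤ n) :
    (Sop p).totalDegree ≤ n := by
  refine totalDegree_mkOp_le p fun s hs => ?_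
  exact (coeff_ne_zero_totalDegree hs).trans hp

lemma totalDegree_Pi0_le {p : P2} {n : ℕ} (hp : p.totalDegree ≤ n) :
    (Pi0 p).totalDegree ≤ n := by
  refine totalDegree_mkOp_le p fun s hs => ?_
  exact (coeff_ne_zero_totalDegree hs).trans hp

lemma totalDegree_pderiv_le {i : Fin 2} {p : P2} {n : ℕ} (hp : p.totalDegree ≤ n + 1) :
    (pderiv i p).totalDegree ≤ n := by
  refine totalDegree_le_of_coeff fun t ht => ?_
  rw [coeff_pderiv] at ht
  have h2 : coeff (t + Finsupp.single i 1) p ≠ 0 := fun h => ht (by rw [h, zero_mul])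
  have := (coeff_ne_zero_totalDegree h2).trans hp
  rw [sum_add_single] at this
  omega

lemma pderiv_Pi0 (p : P2) : pderiv 1 (Pi0 p) = 0 := by
  ext t
  rw [coeff_pderiv, MvPolynomial.coeff_zero, coeff_Pi0]
  simp [Finsupp.single_apply]

lemma pderiv0_sub_Pi0 {R : P2} (hR : pderiv 0 (pderiv 1 R) = 0) :
    pderiv 0 (R - Pi0 R) = 0 := by
  have key2 : ∀ u : Fin 2 →₀ ℕ, u 1 ≠ 0 → u 0 ≠ 0 → coeff u R = 0 := by
    intro u h1 h0
    set w := u - Finsupp.single 0 1 - Finsupp.single 1 1 with hw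
    have hu : u = w + Finsupp.single 0 1 + Finsupp.single 1 1 := by
      rw [hw]
      ext a
      fin_cases a <;>
        simp [Finsupp.add_apply, Finsupp.tsub_apply, Finsupp.single_apply] <;> omega
    have h3 := congrArg (coeff w) hR
    rw [coeff_pderiv, MvPolynomial.coeff_zero] at h3
    have h4 : coeff (w + Finsupp.single 0 1) (pderiv 1 R) = 0 :=
      (mul_eq_zero.mp h3).resolve_right (by positivity)
    rw [coeff_pderiv] at h4
    have h5 : coeff (w + Finsupp.single 0 1 + Finsupp.single 1 1) R = 0 :=
      (mul_eq_zero.mp h4).resolve_right (by positivity)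
    rw [hu]; exact h5
  ext t
  rw [coeff_pderiv, MvPolynomial.coeff_zero, MvPolynomial.coeff_sub, coeff_Pi0]
  by_cases h : ((t + Finsupp.single 0 1 : Fin 2 →₀ ℕ)) 1 = 0
  · rw [if_pos h, sub_self, zero_mul]
  · rw [if_neg h, sub_zero, key2 _ h (by simp [Finsupp.add_apply, Finsupp.single_apply]),
      zero_mul]

lemma pderiv_pderiv_comm (i j : Fin 2) (f : P2) :
    pderiv i (pderiv j f) = pderiv j (pderiv i f) := by
  ext t
  rw [coeff_pderiv, coeff_pderiv, coeff_pderiv, coeff_pderiv, add_right_comm]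
  rcases eq_or_ne i j with rfl | hij
  · ring
  · simp only [Finsupp.add_apply, Finsupp.single_apply, if_neg hij, if_neg (Ne.symm hij)]
    push_cast
    ring

lemma fsum_eq (t : Fin 2 →₀ ℕ) : (t.sum fun _ e => e) = t 0 + t 1 := by
  rw [Finsupp.sum_fintype _ _ (fun _ => rfl)]
  exact Fin.sum_univ_two _

lemma coeff_XX (i j : Fin 2) (q : P2) (t : Fin 2 →₀ ℕ) :
    coeff (t + Finsupp.single i 1 + Finsupp.single j 1) (X i * X j * q) = coeff t q := by
  rw [mul_assoc]
  have h : t + Finsupp.single i 1 + Finsupp.single j 1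
      = Finsupp.single i 1 + (Finsupp.single j 1 + t) := by
    ext a
    simp only [Finsupp.add_apply]
    ring
  rw [h, coeff_X_mul, coeff_X_mul]

lemma cdd00 (q : P2) (t : Fin 2 →₀ ℕ) :
    coeff t (pderiv 0 (pderiv 0 (X 0 * X 0 * q)))
      = (((t 0 : ℝ) + 1) * ((t 0 : ℝ) + 2)) * coeff t q := by
  rw [coeff_pderiv, coeff_pderiv, coeff_XX]
  simp [Finsupp.add_apply, Finsupp.single_apply]
  ring

lemma cdd01 (q : P2) (t : Fin 2 →₀ ℕ) :
    coeff t (pderiv 0 (pderiv 1 (X 0 * X 1 * q)))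
      = (((t 0 : ℝ) + 1) * ((t 1 : ℝ) + 1)) * coeff t q := by
  rw [coeff_pderiv, coeff_pderiv, coeff_XX]
  simp [Finsupp.add_apply, Finsupp.single_apply]
  ring

lemma cdd10 (q : P2) (t : Fin 2 →₀ ℕ) :
    coeff t (pderiv 1 (pderiv 0 (X 1 * X 0 * q)))
      = (((t 0 : ℝ) + 1) * ((t 1 : ℝ) + 1)) * coeff t q := by
  rw [coeff_pderiv, coeff_pderiv, coeff_XX]
  simp [Finsupp.add_apply, Finsupp.single_apply]
  ring

lemma cdd11 (q : P2) (t : Fin 2 →₀ ℕ) :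
    coeff t (pderiv 1 (pderiv 1 (X 1 * X 1 * q)))
      = (((t 1 : ℝ) + 1) * ((t 1 : ℝ) + 2)) * coeff t q := by
  rw [coeff_pderiv, coeff_pderiv, coeff_XX]
  simp [Finsupp.add_apply, Finsupp.single_apply]
  ring

lemma divdiv_xxT_coeff (q : P2) (t : Fin 2 →₀ ℕ) :
    coeff t (pdivDiv (xxT q))
      = ((((t.sum fun _ e => e : ℕ) : ℝ) + 2) * (((t.sum fun _ e => e : ℕ) : ℝ) + 3))
        * coeff t q := by
  rw [pdivDiv]
  simp only [Fin.sum_univ_two, MvPolynomial.coeff_add, xxT, Matrix.of_apply]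
  rw [cdd00, cdd01, cdd10, cdd11, fsum_eq]
  push_cast
  ring

lemma psymCurl_00 (v : Fin 2 → P2) : psymCurl v 0 0 = pderiv 1 (v 0) := by
  show (1 / 2 : ℝ) • (pderiv 1 (v 0) + pderiv 1 (v 0)) = _
  module

lemma psymCurl_11 (v : Fin 2 → P2) : psymCurl v 1 1 = -(pderiv 0 (v 1)) := by
  show (1 / 2 : ℝ) • (-(pderiv 0 (v 1)) + -(pderiv 0 (v 1))) = _
  module

lemma psymCurl_01 (v : Fin 2 → P2) :
    psymCurl v 0 1 = (1 / 2 : ℝ) • (-(pderiv 0 (v 0)) + pderiv 1 (v 1)) := by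
  show (1 / 2 : ℝ) • (-(pderiv 0 (v 0)) + pderiv 1 (v 1)) = _
  module

lemma psymCurl_10 (v : Fin 2 → P2) :
    psymCurl v 1 0 = (1 / 2 : ℝ) • (-(pderiv 0 (v 0)) + pderiv 1 (v 1)) := by
  show (1 / 2 : ℝ) • (pderiv 1 (v 1) + -(pderiv 0 (v 0))) = _
  module

lemma divdiv_symCurl (v : Fin 2 → P2) : pdivDiv (psymCurl v) = 0 := by
  rw [pdivDiv, Fin.sum_univ_two, Fin.sum_univ_two, Fin.sum_univ_two,
    psymCurl_00, psymCurl_01, psymCurl_10, psymCurl_11]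
  simp only [Derivation.map_smul, map_add, map_neg]
  simp only [pderiv_pderiv_comm 1 0]
  module

lemma pdivDiv_add (A B : Matrix (Fin 2) (Fin 2) P2) :
    pdivDiv (A + B) = pdivDiv A + pdivDiv B := by
  simp only [pdivDiv, Matrix.add_apply, map_add, Finset.sum_add_distrib]

lemma tdXXq (i j : Fin 2) {q : P2} {m : ℕ} (hq : q.totalDegree ≤ m) :
    (X i * X j * q).totalDegree ≤ m + 2 := by
  refine (totalDegree_mul _ _).trans ?_
  have h1 : (X i * X j : P2).totalDegree ≤ 2 := by
    refine (totalDegree_mul _ _).trans ?_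
    rw [totalDegree_X, totalDegree_X]
  omega

lemma td_add {a b : P2} {n : ℕ} (ha : a.totalDegree ≤ n) (hb : b.totalDegree ≤ n) :
    (a + b).totalDegree ≤ n :=
  (totalDegree_add _ _).trans (max_le ha hb)

end Stmt8

/-- Decomposition `τ = sym curl v + x xᵀ q` of symmetric polynomial matrices,
with `q` uniquely determined by `τ`. -/
theorem stmt_8 (k : ℕ) (hk : 2 ≤ k) (τ : Matrix (Fin 2) (Fin 2) P2)
    (hsym : τᵀ = τ) (hdeg : ∀ i j, (τ i j).totalDegree ≤ k) :
    ∃ q : P2, q.totalDegree ≤ k - 2 ∧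
      (∃ v : Fin 2 → P2, (∀ i, (v i).totalDegree ≤ k + 1) ∧
        τ = psymCurl v + xxT q) ∧
      ∀ q' : P2, q'.totalDegree ≤ k - 2 →
        (∃ v' : Fin 2 → P2, (∀ i, (v' i).totalDegree ≤ k + 1) ∧
          τ = psymCurl v' + xxT q') →
        q' = q := by
  classical
  obtain ⟨m, rfl⟩ : ∃ m, k = m + 2 := ⟨k - 2, by omega⟩
  clear hk
  set q : P2 := Stmt8.Sop (pdivDiv τ) with hqdef
  have hddτ : (pdivDiv τ).totalDegree ≤ m := by
    rw [pdivDiv, Fin.sum_univ_two, Fin.sum_univ_two, Fin.sum_univ_two]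
    have hb : ∀ i j : Fin 2, ((pderiv i (pderiv j (τ i j))).totalDegree ≤ m) := by
      intro i j
      refine Stmt8.totalDegree_pderiv_le (Stmt8.totalDegree_pderiv_le ?_)
      have := hdeg i j
      omega
    exact Stmt8.td_add (Stmt8.td_add (hb 0 0) (hb 0 1)) (Stmt8.td_add (hb 1 0) (hb 1 1))
  have hq : q.totalDegree ≤ m := Stmt8.totalDegree_Sop_le hddτ
  have hKq : pdivDiv (xxT q) = pdivDiv τ := by
    ext t
    rw [Stmt8.divdiv_xxT_coeff, hqdef, Stmt8.coeff_Sop]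
    have hne : ((((t.sum fun _ e => e : ℕ) : ℝ) + 2) * (((t.sum fun _ e => e : ℕ) : ℝ) + 3))
        ≠ 0 := by positivity
    rw [mul_comm, div_mul_cancel₀ _ hne]
  have hτ10 : τ 1 0 = τ 0 1 := by
    have := congrFun (congrFun hsym 0) 1
    simpa [Matrix.transpose_apply] using this
  set σ00 : P2 := τ 0 0 - X 0 * X 0 * q with hs00
  set σ01 : P2 := τ 0 1 - X 0 * X 1 * q with hs01
  set σ11 : P2 := τ 1 1 - X 1 * X 1 * q with hs11
  have hσdd : pderiv 0 (pderiv 0 σ00) + pderiv 0 (pderiv 1 σ01) + pderiv 1 (pderiv 0 σ01)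
      + pderiv 1 (pderiv 1 σ11) = 0 := by
    have h2 := hKq
    simp only [pdivDiv, Fin.sum_univ_two, xxT, Matrix.of_apply] at h2
    rw [hτ10, mul_comm (X (1 : Fin 2)) (X 0)] at h2
    rw [hs00, hs01, hs11]
    simp only [map_sub]
    linear_combination - h2
  set R : P2 := σ01 + σ01 + pderiv 0 (Stmt8.Iop 1 σ00) + pderiv 1 (Stmt8.Iop 0 σ11) with hRdef
  have hR10 : pderiv 0 (pderiv 1 R) = 0 := by
    rw [hRdef]
    simp only [map_add]
    rw [Stmt8.pderiv_pderiv_comm 1 0 (Stmt8.Iop 1 σ00), Stmt8.pderiv_Iop_self 1 σ00,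
      Stmt8.pderiv_pderiv_comm 0 1 (pderiv 1 (Stmt8.Iop 0 σ11)),
      Stmt8.pderiv_pderiv_comm 0 1 (Stmt8.Iop 0 σ11), Stmt8.pderiv_Iop_self 0 σ11]
    rw [Stmt8.pderiv_pderiv_comm 1 0 σ01] at hσdd
    linear_combination hσdd
  have hP1 : pderiv 1 (Stmt8.Pi0 R) = 0 := Stmt8.pderiv_Pi0 R
  have hP0 : pderiv 0 (R - Stmt8.Pi0 R) = 0 := Stmt8.pderiv0_sub_Pi0 hR10
  set v : Fin 2 → P2 :=
    ![Stmt8.Iop 1 σ00 + -(Stmt8.Iop 0 (Stmt8.Pi0 R)),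
      -(Stmt8.Iop 0 σ11) + Stmt8.Iop 1 (R - Stmt8.Pi0 R)] with hvdef
  have hv0 : v 0 = Stmt8.Iop 1 σ00 + -(Stmt8.Iop 0 (Stmt8.Pi0 R)) := rfl
  have hv1 : v 1 = -(Stmt8.Iop 0 σ11) + Stmt8.Iop 1 (R - Stmt8.Pi0 R) := rfl
  have hd10 : pderiv 1 (v 0) = σ00 := by
    rw [hv0, map_add, map_neg, Stmt8.pderiv_Iop_self,
      Stmt8.pderiv_Iop_of_ne one_ne_zero hP1]
    simp
  have hd01 : pderiv 0 (v 1) = -σ11 := by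
    rw [hv1, map_add, map_neg, Stmt8.pderiv_Iop_self,
      Stmt8.pderiv_Iop_of_ne zero_ne_one hP0]
    simp
  have hd00 : pderiv 0 (v 0) = pderiv 0 (Stmt8.Iop 1 σ00) - Stmt8.Pi0 R := by
    rw [hv0, map_add, map_neg, Stmt8.pderiv_Iop_self]
    ring
  have hd11 : pderiv 1 (v 1) = -(pderiv 1 (Stmt8.Iop 0 σ11)) + (R - Stmt8.Pi0 R) := by
    rw [hv1, map_add, map_neg, Stmt8.pderiv_Iop_self]
  have hsum : -(pderiv 0 (v 0)) + pderiv 1 (v 1) = σ01 + σ01 := by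
    rw [hd00, hd11, hRdef]
    ring
  have hσ00d : σ00.totalDegree ≤ m + 2 := by
    rw [hs00]
    exact (totalDegree_sub _ _).trans (max_le (hdeg 0 0) (Stmt8.tdXXq 0 0 hq))
  have hσ01d : σ01.totalDegree ≤ m + 2 := by
    rw [hs01]
    exact (totalDegree_sub _ _).trans (max_le (hdeg 0 1) (Stmt8.tdXXq 0 1 hq))
  have hσ11d : σ11.totalDegree ≤ m + 2 := by
    rw [hs11]
    exact (totalDegree_sub _ _).trans (max_le (hdeg 1 1) (Stmt8.tdXXq 1 1 hq))
  have hRd : R.totalDegree ≤ m + 2 := by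
    rw [hRdef]
    refine Stmt8.td_add (Stmt8.td_add (Stmt8.td_add hσ01d hσ01d) ?_) ?_
    · exact Stmt8.totalDegree_pderiv_le (Stmt8.totalDegree_Iop_le hσ00d)
    · exact Stmt8.totalDegree_pderiv_le (Stmt8.totalDegree_Iop_le hσ11d)
  refine ⟨q, by omega, ⟨v, ?_, ?_⟩, ?_⟩
  · intro i
    fin_cases i
    · show (v 0).totalDegree ≤ m + 2 + 1
      rw [hv0]
      refine Stmt8.td_add (Stmt8.totalDegree_Iop_le hσ00d) ?_
      rw [totalDegree_neg]
      exact Stmt8.totalDegree_Iop_le (Stmt8.totalDegree_Pi0_le hRd)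
    · show (v 1).totalDegree ≤ m + 2 + 1
      rw [hv1]
      refine Stmt8.td_add ?_ ?_
      · rw [totalDegree_neg]
        exact Stmt8.totalDegree_Iop_le hσ11d
      · refine Stmt8.totalDegree_Iop_le ?_
        exact (totalDegree_sub _ _).trans (max_le hRd (Stmt8.totalDegree_Pi0_le hRd))
  · refine Matrix.ext fun i j => ?_
    fin_cases i <;> fin_cases j
    · show τ 0 0 = (psymCurl v + xxT q) 0 0
      rw [Matrix.add_apply, Stmt8.psymCurl_00, hd10, hs00, xxT, Matrix.of_apply]
      ring
    · show τ 0 1 = (psymCurl v + xxT q) 0 1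
      rw [Matrix.add_apply, Stmt8.psymCurl_01, hsum, xxT, Matrix.of_apply]
      have h2 : (1 / 2 : ℝ) • (σ01 + σ01) = σ01 := by module
      rw [h2, hs01]
      ring
    · show τ 1 0 = (psymCurl v + xxT q) 1 0
      rw [Matrix.add_apply, Stmt8.psymCurl_10, hsum, xxT, Matrix.of_apply]
      have h2 : (1 / 2 : ℝ) • (σ01 + σ01) = σ01 := by module
      rw [h2, hτ10, hs01, mul_comm (X (1 : Fin 2)) (X 0)]
      ring
    · show τ 1 1 = (psymCurl v + xxT q) 1 1
      rw [Matrix.add_apply, Stmt8.psymCurl_11, hd01, hs11, xxT, Matrix.of_apply]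
      ring
  · rintro q' hq' ⟨v', hv', hτ'⟩
    have h := congrArg pdivDiv hτ'
    rw [Stmt8.pdivDiv_add, Stmt8.divdiv_symCurl, zero_add] at h
    ext t
    have h2 := congrArg (MvPolynomial.coeff t) h
    rw [Stmt8.divdiv_xxT_coeff] at h2
    have hne : ((((t.sum fun _ e => e : ℕ) : ℝ) + 2) * (((t.sum fun _ e => e : ℕ) : ℝ) + 3))
        ≠ 0 := by positivity
    rw [hqdef, Stmt8.coeff_Sop, h2, mul_comm, mul_div_assoc, div_self hne, mul_one]
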